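/- Let p, q ∈ ℂ^{n+1} be nonzero with 0 < d(p,q) < π/2 and let t ∈ ℝ. Then Φ_t is complex-linear with |Φ_t(z)| = |z| for all z ∈ ℂ^{n+1} (a unitary map); Φ_t(z)·ᾱ = e^{−it}·(z·ᾱ) and Φ_t(z)·β̄ = e^{it}·(z·β̄) for all z; Φ_t(γ_s(p,q)) = γ_{s+t}(p,q) for all s ∈ ℝ; and consequently μ_{p,q}(Φ_t(z)) = μ_{p,q}(z) for every nonzero z with z·ᾱ ≠ 0 and z·β̄ ≠ 0. -/

import Mathlib

noncomputable section

/-- Hermitian product `w·z̄ = Σᵢ wⁱ·conj(zⁱ)` on `ℂ^m`. -/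
def herm {m : ℕ} (w z : EuclideanSpace ℂ (Fin m)) : ℂ :=
  ∑ i, w i * (starRingEnd ℂ) (z i)

/-- Fubini–Study distance between (the projective classes of) `p` and `q`. -/
def fsDist {m : ℕ} (p q : EuclideanSpace ℂ (Fin m)) : ℝ :=
  Real.arccos (‖herm p q‖ / (‖p‖ * ‖q‖))

/-- Initial velocity `γ₀'(p,q)` of the geodesic from `[p]` to `[q]`. -/
def gammaDir {m : ℕ} (p q : EuclideanSpace ℂ (Fin m)) : EuclideanSpace ℂ (Fin m) :=
  (Real.cot (fsDist p q) : ℂ) • (((‖p‖ : ℂ) / herm q p) • q - (‖p‖ : ℂ)⁻¹ • p)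

/-- The geodesic `γ_t(p,q) = cos t·(p/|p|) + sin t·γ₀'(p,q)`. -/
def geo {m : ℕ} (t : ℝ) (p q : EuclideanSpace ℂ (Fin m)) : EuclideanSpace ℂ (Fin m) :=
  (Real.cos t : ℂ) • ((‖p‖ : ℂ)⁻¹ • p) + (Real.sin t : ℂ) • gammaDir p q

/-- The velocity `γ_t'(p,q) = −sin t·(p/|p|) + cos t·γ₀'(p,q)`. -/
def geoVel {m : ℕ} (t : ℝ) (p q : EuclideanSpace ℂ (Fin m)) : EuclideanSpace ℂ (Fin m) :=
  (-(Real.sin t) : ℂ) • ((‖p‖ : ℂ)⁻¹ • p) + (Real.cos t : ℂ) • gammaDir p q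

/-- `α = (p/|p| + i·γ₀'(p,q))/√2`. -/
def alphaV {m : ℕ} (p q : EuclideanSpace ℂ (Fin m)) : EuclideanSpace ℂ (Fin m) :=
  ((Real.sqrt 2 : ℂ))⁻¹ • ((‖p‖ : ℂ)⁻¹ • p + Complex.I • gammaDir p q)

/-- `β = (p/|p| − i·γ₀'(p,q))/√2`. -/
def betaV {m : ℕ} (p q : EuclideanSpace ℂ (Fin m)) : EuclideanSpace ℂ (Fin m) :=
  ((Real.sqrt 2 : ℂ))⁻¹ • ((‖p‖ : ℂ)⁻¹ • p - Complex.I • gammaDir p q)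

/-- `μ_{p,q}(z) = −(1/2)·log(2·|z·ᾱ|·|z·β̄|/|z|²)`. -/
def muW {m : ℕ} (p q z : EuclideanSpace ℂ (Fin m)) : ℝ :=
  -(1 / 2 : ℝ) * Real.log (2 * ‖herm z (alphaV p q)‖ *
    ‖herm z (betaV p q)‖ / ‖z‖ ^ 2)

/-- The isometry `Φ_t(z) = z − (z·ᾱ)α − (z·β̄)β + e^{−it}(z·ᾱ)α + e^{it}(z·β̄)β`. -/
def PhiMap {m : ℕ} (p q : EuclideanSpace ℂ (Fin m)) (t : ℝ) (z : EuclideanSpace ℂ (Fin m)) :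
    EuclideanSpace ℂ (Fin m) :=
  z - herm z (alphaV p q) • alphaV p q - herm z (betaV p q) • betaV p q
    + (Complex.exp (-(Complex.I * t)) * herm z (alphaV p q)) • alphaV p q
    + (Complex.exp (Complex.I * t) * herm z (betaV p q)) • betaV p q

open Complex
lemma herm_eq_inner {m : ℕ} (w z : EuclideanSpace ℂ (Fin m)) :
    herm w z = @inner ℂ _ _ z w := by
  simp [herm, PiLp.inner_apply, RCLike.inner_apply, mul_comm]

variable {n : ℕ} (p q : EuclideanSpace ℂ (Fin (n + 1)))

section
variable (hp : p ≠ 0) (hq : q ≠ 0) (hd0 : 0 < fsDist p q) (hd2 : fsDist p q < Real.pi / 2)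
include hp hq hd0 hd2

lemma cos_fsDist : Real.cos (fsDist p q) = ‖herm p q‖ / (‖p‖ * ‖q‖) := by
  have hp' : 0 < ‖p‖ := norm_pos_iff.mpr hp
  have hq' : 0 < ‖q‖ := norm_pos_iff.mpr hq
  rw [fsDist, Real.cos_arccos]
  · have : (0:ℝ) ≤ ‖herm p q‖ / (‖p‖ * ‖q‖) := by positivity
    linarith
  · rw [div_le_one (by positivity)]
    calc ‖herm p q‖ = ‖@inner ℂ _ _ q p‖ := by rw [herm_eq_inner]
    _ ≤ ‖q‖ * ‖p‖ := norm_inner_le_norm q p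
    _ = ‖p‖ * ‖q‖ := mul_comm _ _

omit hp hq in
lemma cos_pos : 0 < Real.cos (fsDist p q) := by
  apply Real.cos_pos_of_mem_Ioo
  constructor
  · nlinarith [Real.pi_pos]
  · exact hd2

omit hp hq in
lemma sin_pos : 0 < Real.sin (fsDist p q) := by
  apply Real.sin_pos_of_pos_of_lt_pi hd0
  nlinarith [Real.pi_pos]

lemma herm_pq_ne : herm p q ≠ 0 := by
  intro h
  have h1 := cos_fsDist p q hp hq hd0 hd2
  rw [h] at h1
  simp at h1
  have h2 := cos_pos p q hd0 hd2
  linarith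

lemma herm_qp_ne : herm q p ≠ 0 := by
  have h := herm_pq_ne p q hp hq hd0 hd2
  intro h2
  apply h
  have : herm p q = (starRingEnd ℂ) (herm q p) := by
    simp [herm, map_sum, mul_comm]
  rw [this, h2, map_zero]

end

section
variable (hp : p ≠ 0) (hq : q ≠ 0) (hd0 : 0 < fsDist p q) (hd2 : fsDist p q < Real.pi / 2)
include hp hq hd0 hd2

lemma inner_pq_ne : (@inner ℂ _ _ p q) ≠ 0 := by
  have := herm_qp_ne p q hp hq hd0 hd2
  rwa [herm_eq_inner] at this

omit hq hd0 hd2 in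
lemma inner_uu : @inner ℂ _ _ ((‖p‖:ℂ)⁻¹ • p) ((‖p‖:ℂ)⁻¹ • p) = 1 := by
  have hp' : (0:ℝ) < ‖p‖ := norm_pos_iff.mpr hp
  have hpc : ((‖p‖:ℝ):ℂ) ≠ 0 := by exact_mod_cast hp'.ne'
  rw [inner_smul_left, inner_smul_right, inner_self_eq_norm_sq_to_K,
    map_inv₀, Complex.conj_ofReal]
  field_simp
  rfl

lemma inner_uv : @inner ℂ _ _ p (gammaDir p q) = 0 := by
  have hp' : (0:ℝ) < ‖p‖ := norm_pos_iff.mpr hp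
  have hpc : ((‖p‖:ℝ):ℂ) ≠ 0 := by exact_mod_cast hp'.ne'
  have hc : (@inner ℂ _ _ p q) ≠ 0 := inner_pq_ne p q hp hq hd0 hd2
  rw [gammaDir, herm_eq_inner]
  simp only [inner_sub_left, inner_sub_right, inner_smul_left, inner_smul_right]
  simp only [inner_self_eq_norm_sq_to_K, map_inv₀, map_div₀, Complex.conj_ofReal]
  generalize hA : @inner ℂ _ _ p q = A at hc ⊢
  field_simp
  simp

lemma inner_vu : @inner ℂ _ _ (gammaDir p q) p = 0 := by
  rw [← inner_conj_symm, inner_uv p q hp hq hd0 hd2, map_zero]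

lemma inner_vv : @inner ℂ _ _ (gammaDir p q) (gammaDir p q) = 1 := by
  have hp' : (0:ℝ) < ‖p‖ := norm_pos_iff.mpr hp
  have hq' : (0:ℝ) < ‖q‖ := norm_pos_iff.mpr hq
  have hpc : ((‖p‖:ℝ):ℂ) ≠ 0 := by exact_mod_cast hp'.ne'
  have hqc : ((‖q‖:ℝ):ℂ) ≠ 0 := by exact_mod_cast hq'.ne'
  have hc : (@inner ℂ _ _ p q) ≠ 0 := inner_pq_ne p q hp hq hd0 hd2
  have hcj : (starRingEnd ℂ) (@inner ℂ _ _ p q) ≠ 0 :=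
    fun h => hc (by simpa using congrArg (starRingEnd ℂ) h)
  have hcos : 0 < Real.cos (fsDist p q) := cos_pos p q hd0 hd2
  have hsin : 0 < Real.sin (fsDist p q) := sin_pos p q hd0 hd2
  have habs : ‖@inner ℂ _ _ p q‖ = Real.cos (fsDist p q) * (‖p‖ * ‖q‖) := by
    have h2 : ‖herm p q‖ = ‖@inner ℂ _ _ p q‖ := by
      rw [herm_eq_inner, ← inner_conj_symm, Complex.norm_conj]
    have h1 := cos_fsDist p q hp hq hd0 hd2
    rw [h2, eq_div_iff (by positivity)] at h1
    linarith
  have hcc : (starRingEnd ℂ) (@inner ℂ _ _ p q) * (@inner ℂ _ _ p q)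
      = ((Real.cos (fsDist p q) * (‖p‖ * ‖q‖) : ℝ) : ℂ)^2 := by
    rw [mul_comm, Complex.mul_conj, Complex.normSq_eq_norm_sq, habs]
    push_cast; ring
  have hcot : Real.cot (fsDist p q) = Real.cos (fsDist p q) / Real.sin (fsDist p q) :=
    Real.cot_eq_cos_div_sin _
  have hpyth : Complex.sin (fsDist p q) ^ 2 + Complex.cos (fsDist p q) ^ 2 = 1 :=
    Complex.sin_sq_add_cos_sq _
  have hsc : Complex.sin (fsDist p q) ≠ 0 := by
    rw [← Complex.ofReal_sin]; exact_mod_cast hsin.ne'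
  have hcosc : Complex.cos (fsDist p q) ≠ 0 := by
    rw [← Complex.ofReal_cos]; exact_mod_cast hcos.ne'
  have hTval : ((Real.cot (fsDist p q):ℝ):ℂ) * Complex.sin (fsDist p q)
      = Complex.cos (fsDist p q) := by
    rw [hcot]; push_cast; field_simp
  rw [gammaDir, herm_eq_inner]
  simp only [inner_sub_left, inner_sub_right, inner_smul_left, inner_smul_right]
  simp only [inner_self_eq_norm_sq_to_K, map_inv₀, map_div₀, Complex.conj_ofReal]
  simp only [RCLike.ofReal_eq_complex_ofReal]
  rw [show @inner ℂ _ _ q p = (starRingEnd ℂ) (@inner ℂ _ _ p q) from (inner_conj_symm q p).symm]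
  rw [Complex.ofReal_mul, Complex.ofReal_mul, Complex.ofReal_cos] at hcc
  generalize hA : @inner ℂ _ _ p q = A at hc hcj hcc ⊢
  generalize hB : (starRingEnd ℂ) A = B at hcj hcc ⊢
  generalize hT : ((Real.cot (fsDist p q):ℝ):ℂ) = T at hTval ⊢
  have hT2 : T^2 * Complex.sin (fsDist p q)^2 = Complex.cos (fsDist p q)^2 := by
    linear_combination (T * Complex.sin (fsDist p q) + Complex.cos (fsDist p q)) * hTval
  field_simp
  linear_combination (-(T^2) - 1) * hcc + (‖p‖:ℂ)^2*(‖q‖:ℂ)^2 * hT2 +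
    (-(T^2*(‖p‖:ℂ)^2*(‖q‖:ℂ)^2)) * hpyth
end

lemma sqrt2_sq : ((Real.sqrt 2 : ℝ):ℂ) * ((Real.sqrt 2 : ℝ):ℂ) = 2 := by
  have : Real.sqrt 2 * Real.sqrt 2 = 2 := Real.mul_self_sqrt (by norm_num)
  exact_mod_cast congrArg (fun x : ℝ => (x:ℂ)) this

lemma sqrt2_ne : ((Real.sqrt 2 : ℝ):ℂ) ≠ 0 := by
  have : (0:ℝ) < Real.sqrt 2 := Real.sqrt_pos.mpr (by norm_num)
  exact_mod_cast this.ne'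

section
variable (hp : p ≠ 0) (hq : q ≠ 0) (hd0 : 0 < fsDist p q) (hd2 : fsDist p q < Real.pi / 2)
include hp hq hd0 hd2

lemma inner_aa : @inner ℂ _ _ (alphaV p q) (alphaV p q) = 1 := by
  have hp' : (0:ℝ) < ‖p‖ := norm_pos_iff.mpr hp
  have hpc : ((‖p‖:ℝ):ℂ) ≠ 0 := by exact_mod_cast hp'.ne'
  have h5 := sqrt2_ne
  have h1 : @inner ℂ _ _ p p = ((‖p‖:ℝ):ℂ)^2 := inner_self_eq_norm_sq_to_K p
  have h2 := inner_uv p q hp hq hd0 hd2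
  have h3 := inner_vu p q hp hq hd0 hd2
  have h4 := inner_vv p q hp hq hd0 hd2
  rw [alphaV]
  simp only [inner_add_left, inner_add_right, inner_smul_left, inner_smul_right,
    Complex.conj_I, Complex.conj_ofReal, map_inv₀, h1, h2, h3, h4]
  field_simp
  linear_combination (-((‖p‖:ℝ):ℂ)) * sqrt2_sq - ((‖p‖:ℝ):ℂ) * Complex.I_sq

lemma inner_bb : @inner ℂ _ _ (betaV p q) (betaV p q) = 1 := by
  have hp' : (0:ℝ) < ‖p‖ := norm_pos_iff.mpr hp
  have hpc : ((‖p‖:ℝ):ℂ) ≠ 0 := by exact_mod_cast hp'.ne'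
  have h5 := sqrt2_ne
  have h1 : @inner ℂ _ _ p p = ((‖p‖:ℝ):ℂ)^2 := inner_self_eq_norm_sq_to_K p
  have h2 := inner_uv p q hp hq hd0 hd2
  have h3 := inner_vu p q hp hq hd0 hd2
  have h4 := inner_vv p q hp hq hd0 hd2
  rw [betaV]
  simp only [inner_sub_left, inner_sub_right, inner_smul_left, inner_smul_right,
    Complex.conj_I, Complex.conj_ofReal, map_inv₀, h1, h2, h3, h4]
  field_simp
  linear_combination (-((‖p‖:ℝ):ℂ)) * sqrt2_sq - ((‖p‖:ℝ):ℂ) * Complex.I_sq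

lemma inner_ab : @inner ℂ _ _ (alphaV p q) (betaV p q) = 0 := by
  have hp' : (0:ℝ) < ‖p‖ := norm_pos_iff.mpr hp
  have hpc : ((‖p‖:ℝ):ℂ) ≠ 0 := by exact_mod_cast hp'.ne'
  have h5 := sqrt2_ne
  have h1 : @inner ℂ _ _ p p = ((‖p‖:ℝ):ℂ)^2 := inner_self_eq_norm_sq_to_K p
  have h2 := inner_uv p q hp hq hd0 hd2
  have h3 := inner_vu p q hp hq hd0 hd2
  have h4 := inner_vv p q hp hq hd0 hd2
  rw [alphaV, betaV]
  simp only [inner_add_left, inner_sub_right, inner_smul_left, inner_smul_right,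
    Complex.conj_I, Complex.conj_ofReal, map_inv₀, h1, h2, h3, h4]
  field_simp
  linear_combination ((‖p‖:ℝ):ℂ) * Complex.I_sq

lemma inner_ba : @inner ℂ _ _ (betaV p q) (alphaV p q) = 0 := by
  rw [← inner_conj_symm, inner_ab p q hp hq hd0 hd2, map_zero]

end

lemma exp_conj_neg (t : ℝ) : (starRingEnd ℂ) (Complex.exp (-(Complex.I * t)))
    = Complex.exp (Complex.I * t) := by
  rw [← Complex.exp_conj]; congr 1; simp

lemma exp_conj_pos (t : ℝ) : (starRingEnd ℂ) (Complex.exp (Complex.I * t))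
    = Complex.exp (-(Complex.I * t)) := by
  rw [← Complex.exp_conj]; congr 1; simp

lemma exp_mul_exp (t : ℝ) : Complex.exp (-(Complex.I * t)) * Complex.exp (Complex.I * t) = 1 := by
  rw [← Complex.exp_add]; simp

lemma phi_linear (t : ℝ) : IsLinearMap ℂ (PhiMap p q t) := by
  constructor
  · intro x y
    simp only [PhiMap, herm_eq_inner, inner_add_right]
    module
  · intro c x
    simp only [PhiMap, herm_eq_inner, inner_smul_right]
    module

section
variable (hp : p ≠ 0) (hq : q ≠ 0) (hd0 : 0 < fsDist p q) (hd2 : fsDist p q < Real.pi / 2)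
include hp hq hd0 hd2

lemma phi_herm_a (t : ℝ) (z : EuclideanSpace ℂ (Fin (n+1))) :
    herm (PhiMap p q t z) (alphaV p q) = Complex.exp (-(Complex.I * t)) * herm z (alphaV p q) := by
  have h1 := inner_aa p q hp hq hd0 hd2
  have h2 := inner_bb p q hp hq hd0 hd2
  have h3 := inner_ab p q hp hq hd0 hd2
  have h4 := inner_ba p q hp hq hd0 hd2
  simp only [PhiMap, herm_eq_inner, inner_add_right, inner_sub_right, inner_smul_right,
    h1, h2, h3, h4]
  ring

lemma phi_herm_b (t : ℝ) (z : EuclideanSpace ℂ (Fin (n+1))) :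
    herm (PhiMap p q t z) (betaV p q) = Complex.exp (Complex.I * t) * herm z (betaV p q) := by
  have h1 := inner_aa p q hp hq hd0 hd2
  have h2 := inner_bb p q hp hq hd0 hd2
  have h3 := inner_ab p q hp hq hd0 hd2
  have h4 := inner_ba p q hp hq hd0 hd2
  simp only [PhiMap, herm_eq_inner, inner_add_right, inner_sub_right, inner_smul_right,
    h1, h2, h3, h4]
  ring

lemma phi_norm (t : ℝ) (z : EuclideanSpace ℂ (Fin (n+1))) :
    ‖PhiMap p q t z‖ = ‖z‖ := by
  have h1 := inner_aa p q hp hq hd0 hd2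
  have h2 := inner_bb p q hp hq hd0 hd2
  have h3 := inner_ab p q hp hq hd0 hd2
  have h4 := inner_ba p q hp hq hd0 hd2
  have key : @inner ℂ _ _ (PhiMap p q t z) (PhiMap p q t z) = @inner ℂ _ _ z z := by
    simp only [PhiMap, herm_eq_inner, inner_add_right, inner_sub_right, inner_smul_right,
      inner_add_left, inner_sub_left, inner_smul_left, map_mul, exp_conj_neg, exp_conj_pos,
      inner_conj_symm, h1, h2, h3, h4]
    linear_combination (@inner ℂ _ _ z (alphaV p q) * @inner ℂ _ _ (alphaV p q) z +
      @inner ℂ _ _ z (betaV p q) * @inner ℂ _ _ (betaV p q) z) * exp_mul_exp t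
  have h5 := inner_self_eq_norm_sq_to_K (𝕜 := ℂ) (PhiMap p q t z)
  rw [key, inner_self_eq_norm_sq_to_K (𝕜 := ℂ) z] at h5
  have h6 : ‖PhiMap p q t z‖^2 = ‖z‖^2 := by exact_mod_cast h5.symm
  rw [← Real.sqrt_sq (norm_nonneg (PhiMap p q t z)), h6, Real.sqrt_sq (norm_nonneg z)]

lemma geo_eq (s : ℝ) : geo s p q = ((Real.sqrt 2:ℝ):ℂ)⁻¹ •
    (Complex.exp (-(Complex.I * s)) • alphaV p q + Complex.exp (Complex.I * s) • betaV p q) := by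
  have he1 : Complex.exp (-(Complex.I * s)) = Complex.cos s - Complex.sin s * Complex.I := by
    rw [show -(Complex.I*(s:ℂ)) = (-(s:ℂ))*Complex.I by ring, Complex.exp_mul_I]
    simp [Complex.cos_neg, Complex.sin_neg]; ring
  have he2 : Complex.exp (Complex.I * s) = Complex.cos s + Complex.sin s * Complex.I := by
    rw [show (Complex.I*(s:ℂ)) = ((s:ℂ))*Complex.I by ring, Complex.exp_mul_I]
  have h5 := sqrt2_ne
  rw [geo, alphaV, betaV]
  
  match_scalars
  · rw [he1, he2]
    have hinv : ((Real.sqrt 2:ℝ):ℂ)⁻¹ * ((Real.sqrt 2:ℝ):ℂ)⁻¹ * 2 = 1 := by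
      rw [← mul_inv]; rw [show ((2:ℂ)) = ((Real.sqrt 2:ℝ):ℂ) * ((Real.sqrt 2:ℝ):ℂ) from sqrt2_sq.symm]
      field_simp
    field_simp
    linear_combination (Complex.cos s / ((‖p‖:ℝ):ℂ)) * sqrt2_sq
  · rw [he1, he2]
    field_simp
    linear_combination Complex.sin s * sqrt2_sq + 2 * Complex.sin s * Complex.I_sq

end

section
variable (hp : p ≠ 0) (hq : q ≠ 0) (hd0 : 0 < fsDist p q) (hd2 : fsDist p q < Real.pi / 2)
include hp hq hd0 hd2

lemma herm_geo_a (s : ℝ) : herm (geo s p q) (alphaV p q)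
    = ((Real.sqrt 2:ℝ):ℂ)⁻¹ * Complex.exp (-(Complex.I * s)) := by
  have h1 := inner_aa p q hp hq hd0 hd2
  have h3 := inner_ab p q hp hq hd0 hd2
  rw [herm_eq_inner, geo_eq p q hp hq hd0 hd2 s]
  rw [inner_smul_right, inner_add_right, inner_smul_right, inner_smul_right, h1, h3]
  ring

lemma herm_geo_b (s : ℝ) : herm (geo s p q) (betaV p q)
    = ((Real.sqrt 2:ℝ):ℂ)⁻¹ * Complex.exp (Complex.I * s) := by
  have h2 := inner_bb p q hp hq hd0 hd2
  have h4 := inner_ba p q hp hq hd0 hd2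
  rw [herm_eq_inner, geo_eq p q hp hq hd0 hd2 s]
  rw [inner_smul_right, inner_add_right, inner_smul_right, inner_smul_right, h2, h4]
  ring

lemma phi_geo (t s : ℝ) : PhiMap p q t (geo s p q) = geo (s + t) p q := by
  have hea : Complex.exp (-(Complex.I * t)) * Complex.exp (-(Complex.I * s))
      = Complex.exp (-(Complex.I * ((s:ℝ) + t))) := by
    rw [← Complex.exp_add]; push_cast; ring_nf
  have heb : Complex.exp (Complex.I * t) * Complex.exp (Complex.I * s)
      = Complex.exp (Complex.I * ((s:ℝ) + t)) := by
    rw [← Complex.exp_add]; push_cast; ring_nf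
  rw [PhiMap, herm_geo_a p q hp hq hd0 hd2 s, herm_geo_b p q hp hq hd0 hd2 s,
    geo_eq p q hp hq hd0 hd2 s, geo_eq p q hp hq hd0 hd2 (s + t)]
  match_scalars
  · push_cast
    linear_combination ((Real.sqrt 2:ℝ):ℂ)⁻¹ * hea
  · push_cast
    linear_combination ((Real.sqrt 2:ℝ):ℂ)⁻¹ * heb

lemma phi_mu (t : ℝ) (z : EuclideanSpace ℂ (Fin (n+1))) :
    muW p q (PhiMap p q t z) = muW p q z := by
  have h1 := phi_herm_a p q hp hq hd0 hd2 t z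
  have h2 := phi_herm_b p q hp hq hd0 hd2 t z
  have h3 := phi_norm p q hp hq hd0 hd2 t z
  have ha : ‖Complex.exp (-(Complex.I * t))‖ = 1 := by
    rw [Complex.norm_exp]; simp
  have hb : ‖Complex.exp (Complex.I * t)‖ = 1 := by
    rw [Complex.norm_exp]; simp
  rw [muW, muW, h1, h2, h3, norm_mul, norm_mul, ha, hb, one_mul, one_mul]
end


theorem stmt12 {n : ℕ} (p q : EuclideanSpace ℂ (Fin (n + 1))) (hp : p ≠ 0) (hq : q ≠ 0)
    (hd0 : 0 < fsDist p q) (hd2 : fsDist p q < Real.pi / 2) (t : ℝ) :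
    IsLinearMap ℂ (PhiMap p q t) ∧
    (∀ z : EuclideanSpace ℂ (Fin (n + 1)), ‖PhiMap p q t z‖ = ‖z‖) ∧
    (∀ z : EuclideanSpace ℂ (Fin (n + 1)),
      herm (PhiMap p q t z) (alphaV p q) = Complex.exp (-(Complex.I * t)) * herm z (alphaV p q)) ∧
    (∀ z : EuclideanSpace ℂ (Fin (n + 1)),
      herm (PhiMap p q t z) (betaV p q) = Complex.exp (Complex.I * t) * herm z (betaV p q)) ∧
    (∀ s : ℝ, PhiMap p q t (geo s p q) = geo (s + t) p q) ∧
    (∀ z : EuclideanSpace ℂ (Fin (n + 1)), z ≠ 0 →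
      herm z (alphaV p q) ≠ 0 → herm z (betaV p q) ≠ 0 →
      muW p q (PhiMap p q t z) = muW p q z) := by
  refine ⟨phi_linear p q t, fun z => phi_norm p q hp hq hd0 hd2 t z,
    fun z => phi_herm_a p q hp hq hd0 hd2 t z,
    fun z => phi_herm_b p q hp hq hd0 hd2 t z,
    fun s => phi_geo p q hp hq hd0 hd2 t s,
    fun z _ _ _ => phi_mu p q hp hq hd0 hd2 t z⟩
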